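/- Isomorphism between unitary and general linear invariants (Procesi): let j, n ≥ 1. Consider the ℂ-algebra homomorphism Φ sending a polynomial P in the entries of 2j generic n×n matrices to the function x ↦ (evaluation of P at (x₁,…,x_j, x₁ᴴ,…,x_jᴴ)). Then the restriction of Φ to the subalgebra of polynomials invariant under simultaneous conjugation by all g ∈ GL(n,ℂ) (acting as y_k ↦ g y_k g⁻¹ on all 2j matrix variables) is injective, and its image equals the set of all functions of the form x ↦ (evaluation of some polynomial Q in 2j matrix variables at (x, xᴴ)) that are invariant under simultaneous unitary conjugation x ↦ (i ↦ U · (x i) · Uᴴ) for all U ∈ U(n,ℂ). Hence the ring of U(n,ℂ) invariants of j complex matrices is isomorphic, as a ℂ-algebra, to the ring of GL(n,ℂ) invariants of the 2j matrices x₁,…,x_j, x₁ᴴ,…,x_jᴴ. -/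

import Mathlib

open Matrix

namespace ProcesiAux
open MvPolynomial Complex Matrix

/-- Evaluation of a substituted polynomial. -/
lemma eval_aeval {σ τ' : Type*} (y : τ' → ℂ) (f : σ → MvPolynomial τ' ℂ)
    (Q : MvPolynomial σ ℂ) :
    eval y (aeval f Q) = eval (fun s => eval y (f s)) Q := by
  rw [aeval_def]
  have := MvPolynomial.eval₂_comp_left (eval y) (algebraMap ℂ (MvPolynomial τ' ℂ)) f Q
  rw [this]
  congr 1
  ext a
  simp [algebraMap_eq]

/-- A polynomial vanishing on the real form `{v : v ∘ τ = conj ∘ v}` vanishes everywhere. -/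
lemma key {σ : Type*} (τ : σ → σ) (hτ : ∀ s, τ (τ s) = s) (P : MvPolynomial σ ℂ)
    (h : ∀ v : σ → ℂ, (∀ s, v (τ s) = starRingEnd ℂ (v s)) → eval v P = 0)
    (w : σ → ℂ) : eval w P = 0 := by
  classical
  set v : σ → ℂ := fun s => (w s + starRingEnd ℂ (w (τ s))) / 2 with hv
  set u : σ → ℂ := fun s => (w s - starRingEnd ℂ (w (τ s))) / (2 * I) with hu
  set q : Polynomial ℂ :=
    MvPolynomial.eval₂ Polynomial.C (fun s => Polynomial.C (v s) + Polynomial.X * Polynomial.C (u s)) P with hq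
  have hqe : ∀ t : ℂ, q.eval t = eval (fun s => v s + t * u s) P := by
    intro t
    rw [hq]
    have := MvPolynomial.eval₂_comp_left (Polynomial.evalRingHom t) Polynomial.C
      (fun s => Polynomial.C (v s) + Polynomial.X * Polynomial.C (u s)) P
    simp only [Polynomial.coe_evalRingHom] at this
    rw [this]
    have h2 : (Polynomial.evalRingHom t).comp Polynomial.C = RingHom.id ℂ := by
      ext a; simp
    rw [h2]
    rw [show (Polynomial.eval t ∘ fun s => Polynomial.C (v s) + Polynomial.X * Polynomial.C (u s))
      = fun s => v s + t * u s from funext fun s => by simp; ring]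
    exact MvPolynomial.eval₂_id P
  have hadm : ∀ t : ℝ, q.eval (t : ℂ) = 0 := by
    intro t
    rw [hqe]
    apply h
    intro s
    simp only [hv, hu, hτ, map_add, map_div₀, _root_.map_mul, map_sub, map_ofNat,
      Complex.conj_conj, Complex.conj_I, Complex.conj_ofReal]
    ring
  have hq0 : q = 0 := by
    apply Polynomial.eq_zero_of_infinite_isRoot
    apply Set.Infinite.mono (s := (fun t : ℝ => (t : ℂ)) '' Set.univ)
    · rintro x ⟨t, -, rfl⟩
      exact hadm t
    · exact Set.Infinite.image (fun a _ b _ hab => by exact_mod_cast hab) Set.infinite_univ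
  have hIe := hqe I
  rw [hq0] at hIe
  simp only [Polynomial.eval_zero] at hIe
  have hw : (fun s => v s + I * u s) = w := by
    funext s
    simp only [hv, hu]
    have h2 : (2:ℂ) * I ≠ 0 := by simp [I_ne_zero]
    field_simp
    ring_nf
  rw [hw] at hIe
  exact hIe.symm


lemma coeff_rescale {σ : Type*} [DecidableEq σ] (c : σ → ℂ) (Q : MvPolynomial σ ℂ) (m : σ →₀ ℕ) :
    coeff m (aeval (fun v => C (c v) * X v) Q) = (m.prod fun v k => c v ^ k) * coeff m Q := by
  induction Q using MvPolynomial.induction_on' with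
  | add p q hp hq => simp only [map_add, coeff_add, hp, hq, mul_add]
  | monomial m' a =>
    rw [aeval_monomial]
    have h1 : (m'.prod fun v k => (C (c v) * X v : MvPolynomial σ ℂ) ^ k)
        = C (m'.prod fun v k => c v ^ k) * m'.prod fun v k => (X v : MvPolynomial σ ℂ) ^ k := by
      rw [Finsupp.prod, Finsupp.prod, Finsupp.prod, map_prod, ← Finset.prod_mul_distrib]
      exact Finset.prod_congr rfl fun v _ => by rw [mul_pow, map_pow]
    rw [h1, algebraMap_eq, ← mul_assoc, ← _root_.map_mul, ← monomial_eq, coeff_monomial, coeff_monomial]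
    by_cases h : m' = m
    · subst h; simp [mul_comm]
    · simp [h]

lemma eval_rescale {σ : Type*} (c : σ → ℂ) (y : σ → ℂ) (Q : MvPolynomial σ ℂ) :
    eval y (aeval (fun v => C (c v) * X v) Q) = eval (fun v => c v * y v) Q := by
  rw [eval_aeval]; simp


lemma weight_one {ι σ : Type*} (A B : σ → ι) (m : σ →₀ ℕ)
    (h : ∀ u : ι → ℂ, (∀ i, ‖u i‖ = 1) →
      (m.prod fun v k => (u (A v) * starRingEnd ℂ (u (B v))) ^ k) = 1)
    (s : ι → ℂ) (hs : ∀ i, s i ≠ 0) :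
    (m.prod fun v k => (s (A v) * (s (B v))⁻¹) ^ k) = 1 := by
  set r : ι → ℝ := fun i => ‖s i‖ with hrdef
  have hr : ∀ i, 0 < r i := fun i => norm_pos_iff.mpr (hs i)
  set e : ι → ℂ := fun i => s i / (r i : ℂ) with hedef
  have he : ∀ i, ‖e i‖ = 1 := by
    intro i
    simp only [hedef, norm_div, Complex.norm_real, Real.norm_eq_abs]
    rw [abs_of_pos (hr i)]; exact div_self (hr i).ne'
  have hrne : ∀ i, (r i : ℂ) ≠ 0 := fun i => by exact_mod_cast (hr i).ne'
  have hse : ∀ i, s i = (r i : ℂ) * e i := fun i => by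
    have h1 : e i = s i / (r i : ℂ) := rfl
    rw [h1, mul_comm, div_mul_cancel₀ _ (hrne i)]
  have heinv : ∀ i, (e i)⁻¹ = starRingEnd ℂ (e i) := fun i => Complex.inv_eq_conj (he i)
  have hene : ∀ i, e i ≠ 0 := fun i => by
    intro h0
    have := he i
    rw [h0] at this
    simpa using this
  set L : ℝ := ∑ v ∈ m.support, (m v : ℝ) * (Real.log (r (A v)) - Real.log (r (B v))) with hLdef
  have hL : L = 0 := by
    by_contra hL0
    have hcirc := h (fun i => Complex.exp ((Real.pi / L * Real.log (r i) : ℝ) * I))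
      (fun i => Complex.norm_exp_ofReal_mul_I _)
    rw [Finsupp.prod] at hcirc
    have hterm : ∀ v ∈ m.support,
        (Complex.exp ((Real.pi / L * Real.log (r (A v)) : ℝ) * I) *
          starRingEnd ℂ (Complex.exp ((Real.pi / L * Real.log (r (B v)) : ℝ) * I))) ^ m v
        = Complex.exp ((((m v : ℝ) * (Real.pi / L * Real.log (r (A v)) - Real.pi / L * Real.log (r (B v)))) : ℝ) * I) := by
      intro v _
      rw [← Complex.exp_conj, ← Complex.exp_add, ← Complex.exp_nat_mul]
      congr 1
      simp only [_root_.map_mul, Complex.conj_I, Complex.conj_ofReal]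
      push_cast
      ring
    rw [Finset.prod_congr rfl hterm, ← Complex.exp_sum] at hcirc
    have hsum : (∑ v ∈ m.support,
        ((((m v : ℝ) * (Real.pi / L * Real.log (r (A v)) - Real.pi / L * Real.log (r (B v)))) : ℝ) * I : ℂ))
        = (Real.pi : ℂ) * I := by
      rw [← Finset.sum_mul, ← Complex.ofReal_sum]
      have : (∑ v ∈ m.support, (m v : ℝ) * (Real.pi / L * Real.log (r (A v)) - Real.pi / L * Real.log (r (B v))))
          = Real.pi / L * L := by
        rw [hLdef, Finset.mul_sum]
        exact Finset.sum_congr rfl fun v _ => by ring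
      rw [this, div_mul_cancel₀ _ hL0]
    rw [hsum, Complex.exp_pi_mul_I] at hcirc
    norm_num at hcirc
  have hsplit : (m.prod fun v k => (s (A v) * (s (B v))⁻¹) ^ k)
      = (m.prod fun v k => ((r (A v) / r (B v) : ℝ) : ℂ) ^ k)
        * (m.prod fun v k => (e (A v) * starRingEnd ℂ (e (B v))) ^ k) := by
    rw [Finsupp.prod, Finsupp.prod, Finsupp.prod, ← Finset.prod_mul_distrib]
    refine Finset.prod_congr rfl fun v _ => ?_
    rw [← mul_pow]
    congr 1
    rw [hse (A v), hse (B v), ← heinv, mul_inv]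
    push_cast
    ring
  rw [hsplit, h e he, mul_one]
  have hreal : (m.prod fun v k => ((r (A v) / r (B v) : ℝ) : ℂ) ^ k)
      = ((m.prod fun v k => (r (A v) / r (B v)) ^ k : ℝ) : ℂ) := by
    rw [Finsupp.prod, Finsupp.prod]
    push_cast
    rfl
  rw [hreal]
  norm_cast
  have : (m.prod fun v k => (r (A v) / r (B v)) ^ k) = Real.exp L := by
    rw [Finsupp.prod, hLdef, Real.exp_sum]
    refine Finset.prod_congr rfl fun v _ => ?_
    have h1 : (r (A v) / r (B v)) = Real.exp (Real.log (r (A v)) - Real.log (r (B v))) := by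
      rw [Real.exp_sub, Real.exp_log (hr _), Real.exp_log (hr _)]
    rw [h1, ← Real.exp_nat_mul]
  rw [this, hL, Real.exp_zero]


variable {j n : ℕ}

/-- The involution on the variable index set. -/
def tau (p : (Fin j ⊕ Fin j) × Fin n × Fin n) : (Fin j ⊕ Fin j) × Fin n × Fin n :=
  (Sum.elim Sum.inr Sum.inl p.1, (p.2.2, p.2.1))

lemma tau_tau (p : (Fin j ⊕ Fin j) × Fin n × Fin n) : tau (tau p) = p := by
  obtain ⟨k, a, b⟩ := p
  cases k <;> rfl

lemma adm_eq_realform (v : (Fin j ⊕ Fin j) × Fin n × Fin n → ℂ)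
    (hv : ∀ s, v (tau s) = starRingEnd ℂ (v s)) :
    v = fun p => Sum.elim (fun k => Matrix.of fun a b => v (Sum.inl k, a, b))
      (fun k => (Matrix.of fun a b => v (Sum.inl k, a, b))ᴴ) p.1 p.2.1 p.2.2 := by
  funext p
  obtain ⟨k, a, b⟩ := p
  cases k with
  | inl k => rfl
  | inr k =>
    have h1 := hv (Sum.inl k, b, a)
    simp only [tau, Sum.elim_inl] at h1
    simp only [Sum.elim_inr, conjTranspose_apply, Matrix.of_apply]
    exact h1

lemma stepA (Q : MvPolynomial ((Fin j ⊕ Fin j) × Fin n × Fin n) ℂ)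
    (hQinv : ∀ U ∈ Matrix.unitaryGroup (Fin n) ℂ, ∀ x : Fin j → Matrix (Fin n) (Fin n) ℂ,
      eval (fun p => Sum.elim (fun i => U * x i * Uᴴ) (fun i => (U * x i * Uᴴ)ᴴ) p.1 p.2.1 p.2.2) Q
        = eval (fun p => Sum.elim x (fun i => (x i)ᴴ) p.1 p.2.1 p.2.2) Q)
    (U : Matrix (Fin n) (Fin n) ℂ) (hU : U ∈ Matrix.unitaryGroup (Fin n) ℂ)
    (y : (Fin j ⊕ Fin j) → Matrix (Fin n) (Fin n) ℂ) :
    eval (fun p => (U * y p.1 * star U) p.2.1 p.2.2) Q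
      = eval (fun p => y p.1 p.2.1 p.2.2) Q := by
  classical
  set f : (Fin j ⊕ Fin j) × Fin n × Fin n → MvPolynomial ((Fin j ⊕ Fin j) × Fin n × Fin n) ℂ :=
    fun v => ∑ d : Fin n, ∑ c : Fin n, C (U v.2.1 c * (star U) d v.2.2) * X (v.1, c, d) with hfdef
  have hf : ∀ (z : (Fin j ⊕ Fin j) × Fin n × Fin n → ℂ) v, eval z (f v)
      = (U * (Matrix.of fun a b => z (v.1, a, b)) * star U) v.2.1 v.2.2 := by
    intro z v
    simp only [hfdef, map_sum, _root_.map_mul, eval_C, eval_X, Matrix.mul_apply,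
      Finset.sum_mul, Matrix.of_apply]
    refine Finset.sum_congr rfl fun d _ => Finset.sum_congr rfl fun c _ => ?_
    ring
  have hvan : ∀ w, eval w ((aeval f Q) - Q) = 0 := by
    apply key tau tau_tau
    intro v hv
    rw [map_sub, sub_eq_zero, eval_aeval]
    have h1 : (fun s => eval v (f s))
        = fun p => Sum.elim (fun i => U * (Matrix.of fun a b => v (Sum.inl i, a, b)) * Uᴴ)
            (fun i => (U * (Matrix.of fun a b => v (Sum.inl i, a, b)) * Uᴴ)ᴴ) p.1 p.2.1 p.2.2 := by
      funext s
      rw [hf v s]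
      obtain ⟨k, a, b⟩ := s
      cases k with
      | inl k => rfl
      | inr k =>
        have hofeq : (Matrix.of fun a b => v (Sum.inr k, a, b))
            = (Matrix.of fun a b => v (Sum.inl k, a, b))ᴴ := by
          funext a' b'
          have h2 := hv (Sum.inl k, b', a')
          simp only [tau, Sum.elim_inl] at h2
          simp only [conjTranspose_apply, Matrix.of_apply]
          exact h2
        have h3 : (U * (Matrix.of fun a b => v ((Sum.inr k : Fin j ⊕ Fin j), a, b)) * star U)
            = (U * (Matrix.of fun a b => v (Sum.inl k, a, b)) * Uᴴ)ᴴ := by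
          rw [hofeq, Matrix.star_eq_conjTranspose, conjTranspose_mul, conjTranspose_mul,
            conjTranspose_conjTranspose, mul_assoc]
        show (U * (Matrix.of fun a b => v ((Sum.inr k : Fin j ⊕ Fin j), a, b)) * star U) a b = _
        rw [h3]
        rfl
    rw [h1, hQinv U hU (fun i => Matrix.of fun a b => v (Sum.inl i, a, b))]
    conv_rhs => rw [adm_eq_realform v hv]
  have h4 := hvan (fun p => y p.1 p.2.1 p.2.2)
  rw [map_sub, sub_eq_zero, eval_aeval] at h4
  have h5 : (fun s => eval (fun p => y p.1 p.2.1 p.2.2) (f s))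
      = fun p => (U * y p.1 * star U) p.2.1 p.2.2 := by
    funext s
    rw [hf]
    rfl
  rw [h5] at h4
  exact h4


lemma diagStep (Q : MvPolynomial ((Fin j ⊕ Fin j) × Fin n × Fin n) ℂ)
    (SA : ∀ U ∈ Matrix.unitaryGroup (Fin n) ℂ, ∀ y : (Fin j ⊕ Fin j) → Matrix (Fin n) (Fin n) ℂ,
      eval (fun p => (U * y p.1 * star U) p.2.1 p.2.2) Q = eval (fun p => y p.1 p.2.1 p.2.2) Q)
    (s : Fin n → ℂ) (hs : ∀ i, s i ≠ 0) (z : (Fin j ⊕ Fin j) × Fin n × Fin n → ℂ) :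
    eval (fun v => (s v.2.1 * (s v.2.2)⁻¹) * z v) Q = eval z Q := by
  classical
  rw [← eval_rescale]
  suffices h : aeval (fun v : (Fin j ⊕ Fin j) × Fin n × Fin n =>
      C (s v.2.1 * (s v.2.2)⁻¹) * X v) Q = Q by rw [h]
  have hcircle : ∀ u : Fin n → ℂ, (∀ i, ‖u i‖ = 1) →
      aeval (fun v : (Fin j ⊕ Fin j) × Fin n × Fin n =>
        C (u v.2.1 * starRingEnd ℂ (u v.2.2)) * X v) Q = Q := by
    intro u hu
    apply MvPolynomial.funext
    intro z'
    rw [eval_rescale]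
    have hmem : Matrix.diagonal u ∈ Matrix.unitaryGroup (Fin n) ℂ := by
      rw [Matrix.mem_unitaryGroup_iff, Matrix.star_eq_conjTranspose, Matrix.diagonal_conjTranspose,
        Matrix.diagonal_mul_diagonal]
      rw [show (fun i => u i * star u i) = fun _ => (1:ℂ) from funext fun i => by
        have : u i * starRingEnd ℂ (u i) = ((‖u i‖ : ℝ) : ℂ) ^ 2 := by
          rw [Complex.mul_conj, ← Complex.sq_norm]
          push_cast
          ring
        simp only [Pi.star_apply]
        rw [show star (u i) = starRingEnd ℂ (u i) from rfl, this, hu i]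
        norm_num]
      exact Matrix.diagonal_one
    have hSA := SA (Matrix.diagonal u) hmem (fun k => Matrix.of fun a b => z' (k, a, b))
    have hpt : (fun p : (Fin j ⊕ Fin j) × Fin n × Fin n =>
        (Matrix.diagonal u * (Matrix.of fun a b => z' (p.1, a, b)) * star (Matrix.diagonal u))
          p.2.1 p.2.2)
        = fun v => (u v.2.1 * starRingEnd ℂ (u v.2.2)) * z' v := by
      funext p
      rw [Matrix.star_eq_conjTranspose, Matrix.diagonal_conjTranspose, Matrix.mul_diagonal,
        Matrix.diagonal_mul]
      simp only [Pi.star_apply, Matrix.of_apply]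
      rw [show star (u p.2.2) = starRingEnd ℂ (u p.2.2) from rfl]
      ring_nf
    rw [hpt] at hSA
    exact hSA
  apply MvPolynomial.ext
  intro m
  rw [coeff_rescale]
  by_cases hm : coeff m Q = 0
  · rw [hm, mul_zero]
  · have hw : ∀ u : Fin n → ℂ, (∀ i, ‖u i‖ = 1) →
        (m.prod fun v k => (u v.2.1 * starRingEnd ℂ (u v.2.2)) ^ k) = 1 := by
      intro u hu
      have hc := congrArg (coeff m) (hcircle u hu)
      rw [coeff_rescale] at hc
      exact mul_right_cancel₀ hm (by rw [hc, one_mul])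
    rw [weight_one (fun v => v.2.1) (fun v => v.2.2) m hw s hs, one_mul]

set_option maxHeartbeats 1000000 in
lemma glStep (Q : MvPolynomial ((Fin j ⊕ Fin j) × Fin n × Fin n) ℂ)
    (SA : ∀ U ∈ Matrix.unitaryGroup (Fin n) ℂ, ∀ y : (Fin j ⊕ Fin j) → Matrix (Fin n) (Fin n) ℂ,
      eval (fun p => (U * y p.1 * star U) p.2.1 p.2.2) Q = eval (fun p => y p.1 p.2.1 p.2.2) Q)
    (g : GL (Fin n) ℂ) (y : (Fin j ⊕ Fin j) → Matrix (Fin n) (Fin n) ℂ) :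
    eval (fun p => ((g : Matrix (Fin n) (Fin n) ℂ) * y p.1 *
        ((g⁻¹ : GL (Fin n) ℂ) : Matrix (Fin n) (Fin n) ℂ)) p.2.1 p.2.2) Q
      = eval (fun p => y p.1 p.2.1 p.2.2) Q := by
  classical
  set M : Matrix (Fin n) (Fin n) ℂ := (g : Matrix (Fin n) (Fin n) ℂ) with hMdef
  have hMunit : IsUnit M := g.isUnit
  have hA : (Mᴴ * M).IsHermitian := Matrix.isHermitian_conjTranspose_mul_self M
  set ev : Fin n → ℝ := hA.eigenvalues with hevdef
  have hnn : ∀ i, 0 ≤ ev i := fun i => Matrix.eigenvalues_conjTranspose_mul_self_nonneg M i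
  have hdetM : M.det ≠ 0 := ((Matrix.isUnit_iff_isUnit_det M).mp hMunit).ne_zero
  have hdet : (Mᴴ * M).det ≠ 0 := by
    rw [Matrix.det_mul, Matrix.det_conjTranspose]
    exact mul_ne_zero (star_ne_zero.mpr hdetM) hdetM
  have hevne : ∀ i, ev i ≠ 0 := by
    intro i hi
    apply hdet
    rw [hA.det_eq_prod_eigenvalues]
    apply Finset.prod_eq_zero (Finset.mem_univ i)
    rw [← hevdef, hi]
    norm_num
  have hevpos : ∀ i, 0 < ev i := fun i => lt_of_le_of_ne (hnn i) (Ne.symm (hevne i))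
  set t : Fin n → ℝ := fun i => Real.sqrt (ev i) with htdef
  have htpos : ∀ i, 0 < t i := fun i => Real.sqrt_pos.mpr (hevpos i)
  have htne : ∀ i, (t i : ℂ) ≠ 0 := fun i => by exact_mod_cast (htpos i).ne'
  have htt : ∀ i, (t i : ℂ) * (t i : ℂ) = (ev i : ℂ) := fun i => by
    rw [← Complex.ofReal_mul, Real.mul_self_sqrt (hnn i)]
  set V : Matrix (Fin n) (Fin n) ℂ := (hA.eigenvectorUnitary : Matrix (Fin n) (Fin n) ℂ) with hVdef
  have hV : V ∈ Matrix.unitaryGroup (Fin n) ℂ := (hA.eigenvectorUnitary).2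
  have hVV := Unitary.mem_iff.mp hV
  have hspec : Mᴴ * M = V * Matrix.diagonal (RCLike.ofReal ∘ ev) * star V := hA.spectral_theorem
  set D : Matrix (Fin n) (Fin n) ℂ := Matrix.diagonal (fun i => (t i : ℂ)) with hDdef
  set Dinv : Matrix (Fin n) (Fin n) ℂ := Matrix.diagonal (fun i => (t i : ℂ)⁻¹) with hDinvdef
  have hDDinv : D * Dinv = 1 := by
    rw [hDdef, hDinvdef, Matrix.diagonal_mul_diagonal]
    rw [show (fun i => (t i : ℂ) * (t i : ℂ)⁻¹) = fun _ => (1:ℂ) from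
      funext fun i => mul_inv_cancel₀ (htne i)]
    exact Matrix.diagonal_one
  have hDinvD : Dinv * D = 1 := by
    rw [hDdef, hDinvdef, Matrix.diagonal_mul_diagonal]
    rw [show (fun i => (t i : ℂ)⁻¹ * (t i : ℂ)) = fun _ => (1:ℂ) from
      funext fun i => inv_mul_cancel₀ (htne i)]
    exact Matrix.diagonal_one
  have hstarDinv : star Dinv = Dinv := by
    rw [hDinvdef, Matrix.star_eq_conjTranspose, Matrix.diagonal_conjTranspose]
    rw [show (star fun i => ((t i : ℂ))⁻¹) = (fun i => ((t i : ℂ))⁻¹) from funext fun i => by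
      show star ((t i : ℂ)⁻¹) = ((t i : ℂ))⁻¹
      rw [show star ((t i : ℂ)⁻¹) = starRingEnd ℂ ((t i : ℂ)⁻¹) from rfl, map_inv₀,
        Complex.conj_ofReal]]
  clear_value ev t V M
  have hdiagev : star V * (Mᴴ * M) * V = Matrix.diagonal (RCLike.ofReal ∘ ev) := by
    rw [hspec]
    have h1 : star V * (V * Matrix.diagonal (RCLike.ofReal ∘ ev) * star V) * V
        = (star V * V) * Matrix.diagonal (RCLike.ofReal ∘ ev) * (star V * V) := by
      noncomm_ring
    rw [h1, hVV.1, one_mul, mul_one]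
  set U1 : Matrix (Fin n) (Fin n) ℂ := M * V * Dinv with hU1def
  have hsU1U1 : star U1 * U1 = 1 := by
    have h1 : star U1 * U1 = Dinv * (star V * (Mᴴ * M) * V) * Dinv := by
      rw [hU1def, StarMul.star_mul, StarMul.star_mul, hstarDinv, Matrix.star_eq_conjTranspose M]
      noncomm_ring
    rw [h1, hdiagev, hDinvdef, Matrix.diagonal_mul_diagonal, Matrix.diagonal_mul_diagonal]
    rw [show (fun i => (t i : ℂ)⁻¹ * (RCLike.ofReal ∘ ev) i * (t i : ℂ)⁻¹) = fun _ => (1:ℂ)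
      from funext fun i => by
        simp only [Function.comp_apply]
        rw [show (RCLike.ofReal (ev i) : ℂ) = ((ev i : ℝ) : ℂ) from rfl, ← htt i]
        rw [show (t i : ℂ)⁻¹ * ((t i : ℂ) * (t i : ℂ)) * (t i : ℂ)⁻¹
          = ((t i : ℂ) * (t i : ℂ)⁻¹) * ((t i : ℂ) * (t i : ℂ)⁻¹) from by ring,
          mul_inv_cancel₀ (htne i), one_mul]]
    exact Matrix.diagonal_one
  have hU1 : U1 ∈ Matrix.unitaryGroup (Fin n) ℂ := by
    rw [Matrix.mem_unitaryGroup_iff]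
    exact mul_eq_one_comm.mp hsU1U1
  have hU1sU1 : U1 * star U1 = 1 := mul_eq_one_comm.mp hsU1U1
  have hM : M = U1 * D * star V := by
    have h1 : U1 * D * star V = M * V * (Dinv * D) * star V := by
      rw [hU1def]; noncomm_ring
    rw [h1, hDinvD, mul_one, Matrix.mul_assoc, hVV.2, mul_one]
  have hMinv : ((g⁻¹ : GL (Fin n) ℂ) : Matrix (Fin n) (Fin n) ℂ) = V * Dinv * star U1 := by
    rw [show ((g⁻¹ : GL (Fin n) ℂ) : Matrix (Fin n) (Fin n) ℂ) = M⁻¹ from by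
      rw [hMdef]; exact Matrix.coe_units_inv g]
    apply Matrix.inv_eq_right_inv
    have h1 : M * (V * Dinv * star U1) = U1 * (D * (star V * V) * Dinv) * star U1 := by
      rw [hM]; noncomm_ring
    rw [h1, hVV.1, mul_one, hDDinv, mul_one, hU1sU1]
  have hconj : ∀ k, M * y k * ((g⁻¹ : GL (Fin n) ℂ) : Matrix (Fin n) (Fin n) ℂ)
      = U1 * (D * (star V * y k * V) * Dinv) * star U1 := by
    intro k
    rw [hMinv, hM]
    noncomm_ring
  calc eval (fun p => (M * y p.1 * ((g⁻¹ : GL (Fin n) ℂ) : Matrix (Fin n) (Fin n) ℂ)) p.2.1 p.2.2) Q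
      = eval (fun p => (U1 * ((fun k => D * (star V * y k * V) * Dinv) p.1) * star U1) p.2.1 p.2.2) Q := by
        rw [show (fun p : (Fin j ⊕ Fin j) × Fin n × Fin n =>
            (M * y p.1 * ((g⁻¹ : GL (Fin n) ℂ) : Matrix (Fin n) (Fin n) ℂ)) p.2.1 p.2.2)
            = fun p : (Fin j ⊕ Fin j) × Fin n × Fin n =>
            (U1 * ((fun k => D * (star V * y k * V) * Dinv) p.1) * star U1) p.2.1 p.2.2 from
          funext fun p => by rw [hconj]]
    _ = eval (fun p => ((fun k => D * (star V * y k * V) * Dinv) p.1) p.2.1 p.2.2) Q :=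
        SA U1 hU1 (fun k => D * (star V * y k * V) * Dinv)
    _ = eval (fun p => (star V * y p.1 * V) p.2.1 p.2.2) Q := by
        have hDS := diagStep Q SA (fun i => (t i : ℂ)) htne
          (fun p => (star V * y p.1 * V) p.2.1 p.2.2)
        rw [← hDS]
        rw [show (fun p : (Fin j ⊕ Fin j) × Fin n × Fin n =>
            ((fun k => D * (star V * y k * V) * Dinv) p.1) p.2.1 p.2.2)
            = fun v : (Fin j ⊕ Fin j) × Fin n × Fin n =>
            ((t v.2.1 : ℂ) * ((t v.2.2 : ℂ))⁻¹) * (star V * y v.1 * V) v.2.1 v.2.2 from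
          funext fun p => by
            simp only [hDdef, hDinvdef]
            rw [Matrix.mul_diagonal, Matrix.diagonal_mul]
            ring]
    _ = eval (fun p => y p.1 p.2.1 p.2.2) Q := by
        have := SA (star V) (Unitary.star_mem hV) y
        rw [star_star] at this
        exact this


end ProcesiAux

/-- Isomorphism between unitary and general linear invariants (Procesi): the
ℂ-algebra homomorphism `Φ`, sending a polynomial `P` in the entries of `2j`
generic `n × n` matrices to the function `x ↦ P(x₁, …, x_j, x₁ᴴ, …, x_jᴴ)`,
restricts to an injection on the subalgebra of polynomials invariant under
simultaneous conjugation by all `g ∈ GL(n,ℂ)`, and its image equals the set of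
all functions of the form `x ↦ Q(x, xᴴ)` that are invariant under simultaneous
unitary conjugation.  Hence the ring of `U(n,ℂ)` invariants of `j` complex
matrices is isomorphic, as a ℂ-algebra, to the ring of `GL(n,ℂ)` invariants of
the `2j` matrices `x₁, …, x_j, x₁ᴴ, …, x_jᴴ`. -/
theorem unitary_invariants_iso_GL_invariants (j n : ℕ) (hj : 1 ≤ j) (hn : 1 ≤ n)
    (Φ : MvPolynomial ((Fin j ⊕ Fin j) × Fin n × Fin n) ℂ →ₐ[ℂ]
      ((Fin j → Matrix (Fin n) (Fin n) ℂ) → ℂ))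
    (hΦ : ∀ (P : MvPolynomial ((Fin j ⊕ Fin j) × Fin n × Fin n) ℂ)
        (x : Fin j → Matrix (Fin n) (Fin n) ℂ),
      Φ P x = MvPolynomial.eval
        (fun p => Sum.elim x (fun i => (x i)ᴴ) p.1 p.2.1 p.2.2) P) :
    Set.InjOn ⇑Φ
      {P : MvPolynomial ((Fin j ⊕ Fin j) × Fin n × Fin n) ℂ |
        ∀ (g : GL (Fin n) ℂ) (y : (Fin j ⊕ Fin j) → Matrix (Fin n) (Fin n) ℂ),
          MvPolynomial.eval
            (fun p => ((g : Matrix (Fin n) (Fin n) ℂ) * y p.1 *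
              ((g⁻¹ : GL (Fin n) ℂ) : Matrix (Fin n) (Fin n) ℂ)) p.2.1 p.2.2) P =
          MvPolynomial.eval (fun p => y p.1 p.2.1 p.2.2) P} ∧
    ⇑Φ '' {P : MvPolynomial ((Fin j ⊕ Fin j) × Fin n × Fin n) ℂ |
        ∀ (g : GL (Fin n) ℂ) (y : (Fin j ⊕ Fin j) → Matrix (Fin n) (Fin n) ℂ),
          MvPolynomial.eval
            (fun p => ((g : Matrix (Fin n) (Fin n) ℂ) * y p.1 *
              ((g⁻¹ : GL (Fin n) ℂ) : Matrix (Fin n) (Fin n) ℂ)) p.2.1 p.2.2) P =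
          MvPolynomial.eval (fun p => y p.1 p.2.1 p.2.2) P}
      = {F : (Fin j → Matrix (Fin n) (Fin n) ℂ) → ℂ |
          (∃ Q : MvPolynomial ((Fin j ⊕ Fin j) × Fin n × Fin n) ℂ,
            ∀ x : Fin j → Matrix (Fin n) (Fin n) ℂ,
              F x = MvPolynomial.eval
                (fun p => Sum.elim x (fun i => (x i)ᴴ) p.1 p.2.1 p.2.2) Q) ∧
          ∀ U ∈ Matrix.unitaryGroup (Fin n) ℂ,
            ∀ x : Fin j → Matrix (Fin n) (Fin n) ℂ,
              F (fun i => U * x i * Uᴴ) = F x} := by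
  classical
  open MvPolynomial in
  constructor
  · -- injectivity
    intro P hP Q' hQ' hPQ
    have hz : ∀ w, MvPolynomial.eval w (P - Q') = 0 := by
      apply ProcesiAux.key ProcesiAux.tau ProcesiAux.tau_tau
      intro v hv
      rw [map_sub, sub_eq_zero]
      have h1 := congrFun hPQ (fun k => Matrix.of fun a b => v (Sum.inl k, a, b))
      rw [hΦ, hΦ] at h1
      rw [ProcesiAux.adm_eq_realform v hv]
      exact h1
    apply MvPolynomial.funext
    intro w
    have := hz w
    rw [map_sub, sub_eq_zero] at this
    exact this
  · ext F
    simp only [Set.mem_image, Set.mem_setOf_eq]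
    constructor
    · rintro ⟨P, hP, rfl⟩
      refine ⟨⟨P, fun x => hΦ P x⟩, ?_⟩
      intro U hU x
      rw [hΦ, hΦ]
      have hUU := Unitary.mem_iff.mp hU
      let gU : GL (Fin n) ℂ := ⟨U, star U, hUU.2, hUU.1⟩
      have h2 := hP gU (Sum.elim x (fun i => (x i)ᴴ))
      have hpt : (fun p : (Fin j ⊕ Fin j) × Fin n × Fin n =>
          Sum.elim (fun i => U * x i * Uᴴ) (fun i => (U * x i * Uᴴ)ᴴ) p.1 p.2.1 p.2.2)
          = fun p : (Fin j ⊕ Fin j) × Fin n × Fin n =>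
            ((gU : Matrix (Fin n) (Fin n) ℂ) * Sum.elim x (fun i => (x i)ᴴ) p.1 *
              ((gU⁻¹ : GL (Fin n) ℂ) : Matrix (Fin n) (Fin n) ℂ)) p.2.1 p.2.2 := by
        funext p
        obtain ⟨k, a, b⟩ := p
        cases k with
        | inl k => rfl
        | inr k =>
          show ((U * x k * Uᴴ)ᴴ) a b = (U * (x k)ᴴ * star U) a b
          rw [conjTranspose_mul, conjTranspose_mul, conjTranspose_conjTranspose,
            Matrix.star_eq_conjTranspose, mul_assoc]
      exact (congrArg (fun z => MvPolynomial.eval z P) hpt).trans h2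
    · rintro ⟨⟨Q, hQ⟩, hUinv⟩
      have hQinv : ∀ U ∈ Matrix.unitaryGroup (Fin n) ℂ, ∀ x : Fin j → Matrix (Fin n) (Fin n) ℂ,
          MvPolynomial.eval (fun p => Sum.elim (fun i => U * x i * Uᴴ) (fun i => (U * x i * Uᴴ)ᴴ)
            p.1 p.2.1 p.2.2) Q
          = MvPolynomial.eval (fun p => Sum.elim x (fun i => (x i)ᴴ) p.1 p.2.1 p.2.2) Q := by
        intro U hU x
        have h1 := hUinv U hU x
        rw [hQ, hQ] at h1
        exact h1
      have SA := ProcesiAux.stepA Q hQinv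
      refine ⟨Q, fun g y => ProcesiAux.glStep Q SA g y, ?_⟩
      funext x
      rw [hΦ]
      exact (hQ x).symm
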